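/- Let R be a commutative Noetherian ring and M a finitely generated R-module. Then the set {x ∈ R : the multiplication map x·id_M : M → M factors through some finitely generated free R-module} equals the intersection, taken over all integers i ≥ 1 and all (not necessarily finitely generated) R-modules N, of the annihilators ann_R Ext^i_R(M, N). -/

import Mathlib

open CategoryTheory Opposite

universe u

section Aux

variable {R : Type u} [CommRing R]

lemma mem_ann_iff_of_iso {A B : ModuleCat.{u} R} (e : A ≅ B) (x : R) :
    x ∈ Module.annihilator R A ↔ x ∈ Module.annihilator R B := by
  rw [Module.mem_annihilator, Module.mem_annihilator]
  constructor
  · intro h b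
    have : b = e.hom (e.inv b) := (e.inv_hom_id_apply b).symm
    rw [this, ← map_smul, h, map_zero]
  · intro h a
    have : a = e.inv (e.hom a) := (e.hom_inv_id_apply a).symm
    rw [this, ← map_smul, h, map_zero]

lemma ann_ext_iff {M : Type u} [AddCommGroup M] [Module R M]
    (P : ProjectiveResolution (ModuleCat.of R M)) (j : ℕ) (N : ModuleCat.{u} R) (x : R) :
    x ∈ Module.annihilator R
        (((Ext R (ModuleCat.{u} R) (j+1)).obj (op (ModuleCat.of R M))).obj N) ↔
    ∀ (φ : P.complex.X (j+1) ⟶ N), P.complex.d (j+2) (j+1) ≫ φ = 0 →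
      ∃ ψ : P.complex.X j ⟶ N, x • φ = P.complex.d (j+1) j ≫ ψ := by
  set C := P.complex.linearYonedaObj R N with hC
  have e1 := P.isoExt (R := R) (j+1) N
  have e2 : C.homology (j+1) ≅ (C.sc' j (j+1) (j+2)).homology :=
    C.homologyIsoSc' j (j+1) (j+2) (by simp) (by simp)
  set S := C.sc' j (j+1) (j+2) with hS
  have e3 := S.moduleCatHomologyIso
  rw [mem_ann_iff_of_iso e1, mem_ann_iff_of_iso e2, mem_ann_iff_of_iso e3,
    Module.mem_annihilator]
  have keyg : ∀ (φ : S.X₂), S.g φ = P.complex.d (j+2) (j+1) ≫ φ := by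
    intro φ
    rfl
  have keyf : ∀ (ψ : S.X₁), S.f ψ = P.complex.d (j+1) j ≫ ψ := by
    intro ψ
    rfl
  constructor
  · intro h φ hφ
    have hmem : φ ∈ LinearMap.ker S.g.hom := by
      exact (LinearMap.mem_ker (f := S.g.hom)).mpr ((keyg φ).trans hφ)
    have h2 := h (Submodule.Quotient.mk ⟨φ, hmem⟩)
    change x • (Submodule.Quotient.mk ⟨φ, hmem⟩ :
      LinearMap.ker S.g.hom ⧸ LinearMap.range S.moduleCatToCycles) = 0 at h2
    rw [← Submodule.Quotient.mk_smul, Submodule.Quotient.mk_eq_zero,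
      LinearMap.mem_range] at h2
    obtain ⟨ψ, hψ⟩ := h2
    refine ⟨ψ, ?_⟩
    have := congrArg Subtype.val hψ
    simp only [ShortComplex.moduleCatToCycles] at this
    exact this.symm.trans (keyf ψ)
  · intro h z
    obtain ⟨⟨φ, hφ⟩, rfl⟩ := Submodule.Quotient.mk_surjective _ z
    change x • (Submodule.Quotient.mk ⟨φ, hφ⟩ :
      LinearMap.ker S.g.hom ⧸ LinearMap.range S.moduleCatToCycles) = 0
    rw [← Submodule.Quotient.mk_smul, Submodule.Quotient.mk_eq_zero, LinearMap.mem_range]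
    obtain ⟨ψ, hψ⟩ := h φ ((keyg φ).symm.trans hφ)
    refine ⟨ψ, ?_⟩
    apply Subtype.ext
    exact (keyf ψ).trans hψ.symm

end Aux

/-- Let `R` be a commutative Noetherian ring and `M` a finitely generated `R`-module.  Then an
element `x ∈ R` is such that multiplication by `x` on `M` factors through a finitely generated
free `R`-module if and only if `x` lies in the intersection, over all `i ≥ 1` and all `R`-modules
`N`, of the annihilators of `Ext^i_R(M, N)`. -/
theorem factoring_set_eq_iInf_ann_ext (R : Type u) [CommRing R] [IsNoetherianRing R]
    (M : Type u) [AddCommGroup M] [Module R M] [Module.Finite R M] :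
    ∀ x : R,
      (∃ (n : ℕ) (g : M →ₗ[R] (Fin n → R)) (f : (Fin n → R) →ₗ[R] M),
        f ∘ₗ g = x • (LinearMap.id : M →ₗ[R] M)) ↔
      x ∈ ⨅ (i : ℕ) (_ : 1 ≤ i) (N : ModuleCat.{u} R),
        Module.annihilator R
          (((Ext R (ModuleCat.{u} R) i).obj (op (ModuleCat.of R M))).obj N) := by
  intro x
  obtain ⟨P⟩ : Nonempty (ProjectiveResolution (ModuleCat.of R M)) :=
    HasProjectiveResolution.out
  constructor
  · rintro ⟨n, g, f, hfg⟩
    simp only [Submodule.mem_iInf]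
    intro i hi N
    obtain ⟨j, rfl⟩ : ∃ j, i = j + 1 := ⟨i - 1, by omega⟩
    rw [ann_ext_iff P j N x]
    intro φ hφ
    set F : ModuleCat.{u} R := ModuleCat.of R (Fin n → R) with hF
    have : Projective F := ModuleCat.projective_of_free (Pi.basisFun R (Fin n))
    set Q := ProjectiveResolution.self F with hQ
    set a := P.lift (ModuleCat.ofHom g) Q with ha
    set b := Q.lift (ModuleCat.ofHom f) P with hb
    have hcomp : ModuleCat.ofHom g ≫ ModuleCat.ofHom f = x • 𝟙 (ModuleCat.of R M) := by
      show ModuleCat.ofHom (f ∘ₗ g) = _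
      rw [hfg]; rfl
    have w1 : (a ≫ b) ≫ P.π =
        P.π ≫ (ChainComplex.single₀ (ModuleCat.{u} R)).map (x • 𝟙 (ModuleCat.of R M)) := by
      rw [← hcomp, Functor.map_comp, Category.assoc, ProjectiveResolution.lift_commutes,
        ← Category.assoc, ProjectiveResolution.lift_commutes, Category.assoc]
    have w2 : (x • 𝟙 P.complex) ≫ P.π =
        P.π ≫ (ChainComplex.single₀ (ModuleCat.{u} R)).map (x • 𝟙 (ModuleCat.of R M)) := by
      apply HomologicalComplex.hom_ext
      intro k
      match k with
      | 0 => simp [Linear.smul_comp, Linear.comp_smul]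
             exact ((Linear.comp_smul _ _ _ (P.π.f 0) x (𝟙 _)).trans
               (congrArg (x • ·) (Category.comp_id _))).symm
      | (k+1) =>
        apply (HomologicalComplex.isZero_single_obj_X (ComplexShape.down ℕ) 0 _ (k+1)
          (by simp)).eq_of_tgt
    set H := ProjectiveResolution.liftHomotopy (x • 𝟙 (ModuleCat.of R M)) (a ≫ b)
      (x • 𝟙 P.complex) w1 w2 with hH
    have hzero : (a ≫ b).f (j+1) = 0 := by
      have hz : Limits.IsZero (Q.complex.X (j+1)) :=
        HomologicalComplex.isZero_single_obj_X (ComplexShape.down ℕ) 0 F (j+1) (by simp)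
      have haz : a.f (j+1) = 0 := hz.eq_of_tgt _ _
      rw [HomologicalComplex.comp_f, haz, Limits.zero_comp]
    have hcomm := H.comm (j+1)
    rw [hzero] at hcomm
    have hxid : (x • 𝟙 P.complex).f (j+1) =
        - ((dNext (j+1)) H.hom + (prevD (j+1)) H.hom) :=
      eq_neg_of_add_eq_zero_right hcomm.symm
    refine ⟨-(H.hom j (j+1) ≫ φ), ?_⟩
    have h1 : x • φ = (x • 𝟙 P.complex).f (j+1) ≫ φ := by
      show x • φ = (x • 𝟙 (P.complex.X (j+1))) ≫ φ
      rw [Linear.smul_comp, Category.id_comp]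
    rw [h1, hxid, dNext_eq H.hom (show (ComplexShape.down ℕ).Rel (j+1) j by simp),
      prevD_eq H.hom (show (ComplexShape.down ℕ).Rel (j+2) (j+1) by simp)]
    simp only [Preadditive.neg_comp, Preadditive.add_comp, Category.assoc, hφ,
      Limits.comp_zero, add_zero, Preadditive.comp_neg, neg_inj]
  · intro hx
    simp only [Submodule.mem_iInf] at hx
    set d10 := P.complex.d 1 0 with hd10
    set K : Submodule R (P.complex.X 0) := LinearMap.range d10.hom with hK
    set N : ModuleCat.{u} R := ModuleCat.of R K with hN
    set φ : P.complex.X 1 ⟶ N := ModuleCat.ofHom d10.hom.rangeRestrict with hφdef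
    have hφ : P.complex.d 2 1 ≫ φ = 0 := by
      apply ModuleCat.hom_ext
      apply LinearMap.ext
      intro p
      apply Subtype.ext
      show d10 (P.complex.d 2 1 p) = 0
      have := P.complex.d_comp_d 2 1 0
      exact DFunLike.congr_fun (congrArg ModuleCat.Hom.hom this) p
    obtain ⟨ψ, hψ⟩ := (ann_ext_iff P 0 N x).mp (hx 1 le_rfl N) φ hφ
    -- key pointwise identity
    have hKey : ∀ q : P.complex.X 1, x • (d10 q) = K.subtype (ψ (d10 q)) := by
      intro q
      have h1 : (x • φ) q = (P.complex.d 1 0 ≫ ψ) q := by rw [hψ]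
      exact congrArg (fun z => K.subtype z) h1
    set π₀ : (P.complex.X 0 : Type u) →ₗ[R] M := (P.π.f 0).hom with hπ₀
    have hsurj : Function.Surjective π₀ :=
      (ModuleCat.epi_iff_surjective (P.π.f 0)).mp inferInstance
    have hexact : LinearMap.range d10.hom = LinearMap.ker π₀ :=
      ShortComplex.moduleCat_exact_iff_range_eq_ker _ |>.mp P.exact₀
    set ψ' : (P.complex.X 0 : Type u) →ₗ[R] K := ψ.hom with hψ'
    set θ : (P.complex.X 0 : Type u) →ₗ[R] P.complex.X 0 :=
      x • LinearMap.id - K.subtype ∘ₗ ψ' with hθ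
    have hθval : ∀ p, θ p = x • p - K.subtype (ψ' p) := fun p => rfl
    have hkerθ : ∀ p ∈ LinearMap.ker π₀, θ p = 0 := by
      intro p hp
      rw [← hexact] at hp
      obtain ⟨q, rfl⟩ := hp
      rw [hθval, sub_eq_zero]
      exact hKey q
    set e := LinearMap.quotKerEquivOfSurjective π₀ hsurj with he
    set s : M →ₗ[R] P.complex.X 0 :=
      (Submodule.liftQ (LinearMap.ker π₀) θ (fun p hp => hkerθ p hp)) ∘ₗ
        (e.symm : M →ₗ[R] _) with hs
    have hse : ∀ p, s (π₀ p) = θ p := by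
      intro p
      have h1 : e (Submodule.Quotient.mk p) = π₀ p := rfl
      have h2 : e.symm (π₀ p) = Submodule.Quotient.mk p := by
        rw [LinearEquiv.symm_apply_eq, h1]
      have h3 : s (π₀ p) = Submodule.liftQ (LinearMap.ker π₀) θ (fun q hq => hkerθ q hq)
          (e.symm (π₀ p)) := rfl
      rw [h3, h2]
      rfl
    have hfinal : ∀ m, π₀ (s m) = x • m := by
      intro m
      obtain ⟨p, rfl⟩ := hsurj m
      rw [hse, hθval, map_sub, map_smul]
      have : π₀ (K.subtype (ψ' p)) = 0 := by
        have hmem : K.subtype (ψ' p) ∈ LinearMap.ker π₀ := by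
          rw [← hexact]; exact (ψ' p).2
        exact hmem
      rw [this, sub_zero]
    -- lift through a finite free module
    have hproj : Module.Projective R (P.complex.X 0) := by
      rw [IsProjective.iff_projective]
      exact P.projective 0
    obtain ⟨m, p, hp⟩ := Module.Finite.exists_fin' R M
    obtain ⟨h, hh⟩ := Module.projective_lifting_property p π₀ hp
    refine ⟨m, h ∘ₗ s, p, ?_⟩
    apply LinearMap.ext
    intro mm
    show p (h (s mm)) = x • mm
    have := DFunLike.congr_fun hh (s mm)
    rw [LinearMap.comp_apply] at this
    rw [this, hfinal]
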